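/- arXiv:1911.00265 — 5 statements merged into one kernel-verified Lean document; each statement's English description precedes it below -/
import Mathlib

section
/- Let d be a positive integer, let f : ℝ^d → ℝ^d be a C¹ diffeomorphism with inverse g, and let u₀, u₁, …, u_m be finitely many auxiliary values. For each uᵢ let p*(·|uᵢ) be a conditionally independent exponential-family density on ℝ^d, i.e. log p*(s|uᵢ) = Σ_{j=1}^d λ_j(uᵢ) q_j(s_j) + λ₀(uᵢ) − log Z(λ(uᵢ)) with p*(s|uᵢ) > 0 everywhere, let δ(·|uᵢ) be a nonnegative outlier density, let ε(uᵢ) ∈ [0,1), and let the contaminated density be p(s|uᵢ) = (1−ε(uᵢ))p*(s|uᵢ) + ε(uᵢ)δ(s|uᵢ); define p(x|uᵢ) := p(g(x)|uᵢ)·|det Dg(x)|. Assume: (i) there is a constant M such that δ(s|uᵢ)/p*(s|uᵢ) ≤ M for all s ∈ ℝ^d and all i, and ε_max·(M+1) ≤ 1/2, where ε_max := max_{0≤i≤m} ε(uᵢ); (ii) there exist vectors w(uᵢ) ∈ ℝ^d, a function h : ℝ^d → ℝ^d, and positive scalar functions c(x), e(uᵢ) such that log( p(x|uᵢ) / (c(x)·e(uᵢ))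 ) = w(uᵢ)ᵀ h(x) for all x and all i; (iii) with λ̄(uᵢ) := (λ₁(uᵢ),…,λ_d(uᵢ)) − (λ₁(u₀),…,λ_d(u₀)) and w̄(uᵢ) := w(uᵢ) − w(u₀), the d×d matrices Λ̄ := Σ_{i=1}^m λ̄(uᵢ)λ̄(uᵢ)ᵀ and W̄ := Σ_{i=1}^m w̄(uᵢ)λ̄(uᵢ)ᵀ are invertible. Then, setting ω̄(uᵢ) := Λ̄⁻¹λ̄(uᵢ) and q(s) := (q₁(s₁),…,q_d(s_d)), there exist an invertible d×d matrix A, a vector α ∈ ℝ^d, a constant C (depending only on M, m, and the vectors ω̄(uᵢ)) and a function ρ : ℝ^d → ℝ^d with ‖ρ(s)‖ ≤ C·ε_max² for all s, such that for every s ∈ ℝ^d: q(s) + Σ_{i=1}^m [ ε(uᵢ)·δ(s|uᵢ)/p*(s|uᵢ) − ε(u₀)·δ(s|u₀)/p*(s|u₀) ]·ω̄(uᵢ) + ρ(s) = A·h(f(s)) + α. -/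
open MeasureTheory Matrix

lemma log_one_add_approx {t : ℝ} (ht : |t| ≤ 1/2) :
    |Real.log (1 + t) - t| ≤ 2 * t ^ 2 := by
  have h1 : |(-t)| < 1 := by rw [abs_neg]; linarith
  have h2 := Real.abs_log_sub_add_sum_range_le h1 1
  simp only [Finset.sum_range_one, pow_one, Nat.cast_zero, zero_add, div_one, abs_neg,
    sub_neg_eq_add, neg_add_eq_sub] at h2
  have h4 : (0:ℝ) < 1 - |t| := by linarith
  refine h2.trans ?_
  rw [div_le_iff₀ h4]
  have h5 : |t| ^ (1 + 1) = t ^ 2 := by norm_num [sq_abs]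
  nlinarith [mul_nonneg (sq_nonneg t) (by linarith : (0:ℝ) ≤ 1 - 2 * |t|)]

lemma vecMulVec_mulVec' {d : ℕ} (a b v : Fin d → ℝ) :
    (Matrix.vecMulVec a b).mulVec v = (b ⬝ᵥ v) • a := by
  funext j
  simp [Matrix.mulVec, Matrix.vecMulVec_apply, dotProduct, Finset.mul_sum, mul_assoc,
    mul_comm, mul_left_comm]

lemma sum_mulVec' {d m : ℕ} (A : Fin m → Matrix (Fin d) (Fin d) ℝ) (v : Fin d → ℝ) :
    (∑ i, A i).mulVec v = ∑ i, (A i).mulVec v := by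
  funext j
  simp [Matrix.mulVec, dotProduct, Finset.sum_apply, Matrix.sum_apply, Finset.sum_mul]
  rw [Finset.sum_comm]

lemma vecMulVec_transpose' {d : ℕ} (a b : Fin d → ℝ) :
    (Matrix.vecMulVec a b)ᵀ = Matrix.vecMulVec b a := by
  funext i j
  simp [Matrix.transpose_apply, Matrix.vecMulVec_apply, mul_comm]

lemma clm_det_comp {E : Type*} [NormedAddCommGroup E] [NormedSpace ℝ E] (A B : E →L[ℝ] E) :
    (A.comp B).det = A.det * B.det := by
  show LinearMap.det ((A.comp B : E →L[ℝ] E) : E →ₗ[ℝ] E)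
    = LinearMap.det (A : E →ₗ[ℝ] E) * LinearMap.det (B : E →ₗ[ℝ] E)
  rw [ContinuousLinearMap.toLinearMap_comp, LinearMap.det_comp]

lemma clm_det_id {E : Type*} [NormedAddCommGroup E] [NormedSpace ℝ E] :
    (ContinuousLinearMap.id ℝ E).det = 1 := by
  show LinearMap.det ((ContinuousLinearMap.id ℝ E : E →L[ℝ] E) : E →ₗ[ℝ] E) = 1
  rw [ContinuousLinearMap.coe_id, LinearMap.det_id]

lemma mulVec_sum' {d m : ℕ} (A : Matrix (Fin d) (Fin d) ℝ) (v : Fin m → Fin d → ℝ) :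
    A.mulVec (∑ i, v i) = ∑ i, A.mulVec (v i) := by
  simp only [← Matrix.mulVecLin_apply, map_sum]

/-- Theorem 1, contaminated exponential-family case: for data `x = f(s)` with
contaminated source densities `p(s|uᵢ) = (1−ε(uᵢ))p*(s|uᵢ) + ε(uᵢ)δ(s|uᵢ)`, a conditionally
independent exponential-family target `p*`, a bounded density ratio `δ/p* ≤ M` with
`ε_max(M+1) ≤ 1/2`, the universal approximation assumption on `p(x|uᵢ)`, and invertible
matrices `Λ̄` and `Σᵢ w̄(uᵢ)λ̄(uᵢ)ᵀ`, there are an invertible matrix `A`, a vector `α`, a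
constant `C` and a remainder `ρ` with `‖ρ(s)‖ ≤ C·ε_max²` such that
`q(s) + Σᵢ [ε(uᵢ)δ(s|uᵢ)/p*(s|uᵢ) − ε(u₀)δ(s|u₀)/p*(s|u₀)]·ω̄(uᵢ) + ρ(s) = A h(f(s)) + α`. -/
theorem identifiability_with_outliers (d m : ℕ) (hd : 0 < d)
    (f g : (Fin d → ℝ) → (Fin d → ℝ))
    (hf : ContDiff ℝ 1 f) (hg : ContDiff ℝ 1 g)
    (hgf : Function.LeftInverse g f) (hfg : Function.RightInverse g f)
    (lam : Fin (m + 1) → Fin d → ℝ) (lam0 : Fin (m + 1) → ℝ) (logZ : Fin (m + 1) → ℝ)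
    (q : Fin d → ℝ → ℝ)
    (pstar : Fin (m + 1) → (Fin d → ℝ) → ℝ)
    (hpos : ∀ i s, 0 < pstar i s)
    (hexp : ∀ i s, Real.log (pstar i s)
      = (∑ j, lam i j * q j (s j)) + lam0 i - logZ i)
    -- contamination by outliers
    (δ : Fin (m + 1) → (Fin d → ℝ) → ℝ) (hδ : ∀ i s, 0 ≤ δ i s)
    (ε : Fin (m + 1) → ℝ) (hε : ∀ i, ε i ∈ Set.Ico (0 : ℝ) 1)
    (p : Fin (m + 1) → (Fin d → ℝ) → ℝ)
    (hp : ∀ i s, p i s = (1 - ε i) * pstar i s + ε i * δ i s)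
    -- density of x given uᵢ, by the change of variables x = f(s), g = f⁻¹
    (pX : Fin (m + 1) → (Fin d → ℝ) → ℝ)
    (hpX : ∀ i x, pX i x = p i (g x) * |(fderiv ℝ g x).det|)
    -- (A3): uniformly bounded density ratio, and ε_max(M+1) ≤ 1/2
    (M : ℝ) (hM : ∀ i s, δ i s / pstar i s ≤ M)
    (εmax : ℝ) (hεmax : εmax = Finset.univ.sup' Finset.univ_nonempty ε)
    (hsmall : εmax * (M + 1) ≤ 1 / 2)
    -- (A4): universal approximation assumption
    (w : Fin (m + 1) → Fin d → ℝ) (h : (Fin d → ℝ) → (Fin d → ℝ))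
    (c : (Fin d → ℝ) → ℝ) (e : Fin (m + 1) → ℝ)
    (hc : ∀ x, 0 < c x) (he : ∀ i, 0 < e i)
    (huniv : ∀ i x, Real.log (pX i x / (c x * e i)) = ∑ j, w i j * h x j)
    -- (A5): invertibility of the two d × d matrices
    (barlam barw : Fin (m + 1) → Fin d → ℝ)
    (hbarlam : ∀ i, barlam i = lam i - lam 0)
    (hbarw : ∀ i, barw i = w i - w 0)
    (Λbar : Matrix (Fin d) (Fin d) ℝ)
    (hΛbar : Λbar = ∑ i : Fin m, Matrix.vecMulVec (barlam i.succ) (barlam i.succ))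
    (hΛ : IsUnit Λbar.det)
    (hW : IsUnit (∑ i : Fin m, Matrix.vecMulVec (barw i.succ) (barlam i.succ)).det)
    (ωbar : Fin (m + 1) → Fin d → ℝ)
    (hωbar : ∀ i, ωbar i = Λbar⁻¹.mulVec (barlam i)) :
    ∃ A : Matrix (Fin d) (Fin d) ℝ, IsUnit A.det ∧ ∃ α : Fin d → ℝ, ∃ C : ℝ,
      ∃ ρ : (Fin d → ℝ) → (Fin d → ℝ),
        (∀ s, ‖ρ s‖ ≤ C * εmax ^ 2) ∧
        ∀ s : Fin d → ℝ,
          (fun j => q j (s j))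
            + (∑ i : Fin m,
                (ε i.succ * (δ i.succ s / pstar i.succ s)
                  - ε 0 * (δ 0 s / pstar 0 s)) • ωbar i.succ)
            + ρ s
          = A.mulVec (h (f s)) + α := by
  -- basic facts
  have hε0 : ∀ k, 0 ≤ ε k := fun k => (hε k).1
  have hε1 : ∀ k, ε k < 1 := fun k => (hε k).2
  have hεle : ∀ k, ε k ≤ εmax := by
    intro k; rw [hεmax]; exact Finset.le_sup' ε (Finset.mem_univ k)
  have hεmax0 : 0 ≤ εmax := le_trans (hε0 0) (hεle 0)
  have hrat0 : ∀ k (s : Fin d → ℝ), 0 ≤ δ k s / pstar k s :=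
    fun k s => div_nonneg (hδ k s) (hpos k s).le
  have hM0 : 0 ≤ M := le_trans (hrat0 0 (fun _ => 0)) (hM 0 (fun _ => 0))
  have hGpos : ∀ k (s : Fin d → ℝ), 0 < 1 + (ε k * (δ k s / pstar k s) - ε k) := by
    intro k s
    have h1 : 0 ≤ ε k * (δ k s / pstar k s) := mul_nonneg (hε0 k) (hrat0 k s)
    nlinarith [hε1 k]
  have htbound : ∀ k (s : Fin d → ℝ),
      |ε k * (δ k s / pstar k s) - ε k| ≤ εmax * (M + 1) := by
    intro k s
    have h1 : ε k * (δ k s / pstar k s) - ε k = ε k * ((δ k s / pstar k s) - 1) := by ring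
    rw [h1, abs_mul, abs_of_nonneg (hε0 k)]
    have h2 : |(δ k s / pstar k s) - 1| ≤ M + 1 := by
      rw [abs_le]; constructor <;> nlinarith [hrat0 k s, hM k s]
    exact mul_le_mul (hεle k) h2 (abs_nonneg _) hεmax0
  have hRabs : ∀ k (s : Fin d → ℝ),
      |Real.log (1 + (ε k * (δ k s / pstar k s) - ε k))
        - (ε k * (δ k s / pstar k s) - ε k)| ≤ 2 * (M + 1) ^ 2 * εmax ^ 2 := by
    intro k s
    refine (log_one_add_approx ((htbound k s).trans hsmall)).trans ?_
    have h2 := mul_self_le_mul_self (abs_nonneg _) (htbound k s)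
    nlinarith [sq_abs (ε k * (δ k s / pstar k s) - ε k)]
  have hppos : ∀ k (s : Fin d → ℝ), 0 < p k s := by
    intro k s
    rw [hp]
    exact add_pos_of_pos_of_nonneg
      (mul_pos (by linarith [hε1 k]) (hpos k s)) (mul_nonneg (hε0 k) (hδ k s))
  have hpfact : ∀ k (s : Fin d → ℝ),
      p k s = pstar k s * (1 + (ε k * (δ k s / pstar k s) - ε k)) := by
    intro k s
    have h1 : pstar k s * (δ k s / pstar k s) = δ k s := by
      rw [mul_comm (pstar k s) (δ k s / pstar k s), div_mul_cancel₀ (δ k s) (hpos k s).ne']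
    rw [hp]
    linear_combination (-ε k) * h1
  have hlogp : ∀ k (s : Fin d → ℝ),
      Real.log (p k s) = (∑ j, lam k j * q j (s j)) + lam0 k - logZ k
        + Real.log (1 + (ε k * (δ k s / pstar k s) - ε k)) := by
    intro k s
    rw [hpfact k s, Real.log_mul (hpos k s).ne' (hGpos k s).ne', hexp]
  -- the Jacobian determinant is nonzero
  have hdet : ∀ s : Fin d → ℝ, (fderiv ℝ g (f s)).det ≠ 0 := by
    intro s
    have hdg : DifferentiableAt ℝ g (f s) := (hg.differentiable one_ne_zero) _
    have hdf : DifferentiableAt ℝ f s := (hf.differentiable one_ne_zero) _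
    have hcomp : fderiv ℝ (g ∘ f) s = (fderiv ℝ g (f s)).comp (fderiv ℝ f s) :=
      fderiv_comp (x := s) hdg hdf
    have hid : g ∘ f = id := funext hgf
    rw [hid, fderiv_id] at hcomp
    have h2 := congrArg ContinuousLinearMap.det hcomp
    rw [clm_det_comp, clm_det_id] at h2
    intro hzero
    rw [hzero, zero_mul] at h2
    exact one_ne_zero h2
  -- key consequence of the universal approximation assumption
  have hlograt : ∀ (k : Fin (m + 1)) (s : Fin d → ℝ),
      Real.log (p k s) - Real.log (e k) - (∑ j, w k j * h (f s) j)
        = Real.log (c (f s)) - Real.log |(fderiv ℝ g (f s)).det| := by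
    intro k s
    have h1 := huniv k (f s)
    have hJpos : 0 < |(fderiv ℝ g (f s)).det| := abs_pos.mpr (hdet s)
    have h2 : pX k (f s) = p k s * |(fderiv ℝ g (f s)).det| := by rw [hpX, hgf]
    have h3 : Real.log (pX k (f s) / (c (f s) * e k))
        = Real.log (p k s) + Real.log |(fderiv ℝ g (f s)).det|
          - (Real.log (c (f s)) + Real.log (e k)) := by
      rw [h2, Real.log_div (mul_pos (hppos k s) hJpos).ne' (mul_pos (hc _) (he k)).ne',
        Real.log_mul (hppos k s).ne' hJpos.ne', Real.log_mul (hc _).ne' (he k).ne']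
    rw [h3] at h1
    linarith
  -- the key scalar equation
  have hkey : ∀ (i : Fin m) (s : Fin d → ℝ),
      barlam i.succ ⬝ᵥ (fun j => q j (s j))
        = barw i.succ ⬝ᵥ h (f s)
          + ((Real.log (e i.succ) - Real.log (e 0)) - (lam0 i.succ - lam0 0)
            + (logZ i.succ - logZ 0) + (ε i.succ - ε 0))
          - (ε i.succ * (δ i.succ s / pstar i.succ s) - ε 0 * (δ 0 s / pstar 0 s))
          - ((Real.log (1 + (ε i.succ * (δ i.succ s / pstar i.succ s) - ε i.succ))
              - (ε i.succ * (δ i.succ s / pstar i.succ s) - ε i.succ))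
            - (Real.log (1 + (ε 0 * (δ 0 s / pstar 0 s) - ε 0))
              - (ε 0 * (δ 0 s / pstar 0 s) - ε 0))) := by
    intro i s
    have hA := hlograt i.succ s
    have hB := hlograt 0 s
    rw [hlogp] at hA hB
    have hbl : barlam i.succ ⬝ᵥ (fun j => q j (s j))
        = (∑ j, lam i.succ j * q j (s j)) - ∑ j, lam 0 j * q j (s j) := by
      simp [dotProduct, hbarlam, sub_mul, Finset.sum_sub_distrib]
    have hbw : barw i.succ ⬝ᵥ h (f s)
        = (∑ j, w i.succ j * h (f s) j) - ∑ j, w 0 j * h (f s) j := by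
      simp [dotProduct, hbarw, sub_mul, Finset.sum_sub_distrib]
    rw [hbl, hbw]
    linarith
  -- reconstruction from the invertible matrix Λbar
  have hΛinv : Λbar⁻¹ * Λbar = 1 := Matrix.nonsing_inv_mul Λbar hΛ
  have hrecon : ∀ v : Fin d → ℝ,
      ∑ i : Fin m, (barlam i.succ ⬝ᵥ v) • ωbar i.succ = v := by
    intro v
    calc ∑ i : Fin m, (barlam i.succ ⬝ᵥ v) • ωbar i.succ
        = ∑ i : Fin m,
            Λbar⁻¹.mulVec ((Matrix.vecMulVec (barlam i.succ) (barlam i.succ)).mulVec v) :=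
          Finset.sum_congr rfl fun i _ => by
            rw [vecMulVec_mulVec', Matrix.mulVec_smul, hωbar]
      _ = Λbar⁻¹.mulVec
            ((∑ i : Fin m, Matrix.vecMulVec (barlam i.succ) (barlam i.succ)).mulVec v) := by
          rw [sum_mulVec', mulVec_sum']
      _ = v := by rw [Matrix.mulVec_mulVec, ← hΛbar, hΛinv, Matrix.one_mulVec]
  -- the matrix A
  refine ⟨Λbar⁻¹ * ∑ i : Fin m, Matrix.vecMulVec (barlam i.succ) (barw i.succ), ?_,
    ∑ i : Fin m, ((Real.log (e i.succ) - Real.log (e 0)) - (lam0 i.succ - lam0 0)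
      + (logZ i.succ - logZ 0) + (ε i.succ - ε 0)) • ωbar i.succ,
    4 * (M + 1) ^ 2 * ∑ i : Fin m, ‖ωbar i.succ‖,
    fun s => ∑ i : Fin m,
      ((Real.log (1 + (ε i.succ * (δ i.succ s / pstar i.succ s) - ε i.succ))
          - (ε i.succ * (δ i.succ s / pstar i.succ s) - ε i.succ))
        - (Real.log (1 + (ε 0 * (δ 0 s / pstar 0 s) - ε 0))
          - (ε 0 * (δ 0 s / pstar 0 s) - ε 0))) • ωbar i.succ, ?_, ?_⟩
  · -- invertibility of A
    rw [Matrix.det_mul]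
    refine (Matrix.isUnit_nonsing_inv_det Λbar hΛ).mul ?_
    have htr : (∑ i : Fin m, Matrix.vecMulVec (barlam i.succ) (barw i.succ))
        = (∑ i : Fin m, Matrix.vecMulVec (barw i.succ) (barlam i.succ))ᵀ := by
      rw [Matrix.transpose_sum]
      exact Finset.sum_congr rfl fun i _ => (vecMulVec_transpose' _ _).symm
    rw [htr, Matrix.det_transpose]
    exact hW
  · -- norm bound on ρ
    intro s
    have hterm : ∀ i : Fin m,
        ‖((Real.log (1 + (ε i.succ * (δ i.succ s / pstar i.succ s) - ε i.succ))
            - (ε i.succ * (δ i.succ s / pstar i.succ s) - ε i.succ))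
          - (Real.log (1 + (ε 0 * (δ 0 s / pstar 0 s) - ε 0))
            - (ε 0 * (δ 0 s / pstar 0 s) - ε 0))) • ωbar i.succ‖
          ≤ (4 * (M + 1) ^ 2 * εmax ^ 2) * ‖ωbar i.succ‖ := by
      intro i
      rw [norm_smul, Real.norm_eq_abs]
      refine mul_le_mul_of_nonneg_right ?_ (norm_nonneg _)
      have h1 := hRabs i.succ s
      have h2 := hRabs 0 s
      calc |_ - _| ≤ |_| + |_| := abs_sub _ _
        _ ≤ 4 * (M + 1) ^ 2 * εmax ^ 2 := by linarith
    calc ‖∑ i : Fin m, _‖ ≤ ∑ i : Fin m, _ := norm_sum_le _ _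
      _ ≤ ∑ i : Fin m, (4 * (M + 1) ^ 2 * εmax ^ 2) * ‖ωbar i.succ‖ :=
        Finset.sum_le_sum fun i _ => hterm i
      _ = (4 * (M + 1) ^ 2 * ∑ i : Fin m, ‖ωbar i.succ‖) * εmax ^ 2 := by
        rw [Finset.mul_sum, Finset.sum_mul]
        exact Finset.sum_congr rfl fun i _ => by ring
  · -- the main identity
    intro s
    have hAmul : (Λbar⁻¹ * ∑ i : Fin m, Matrix.vecMulVec (barlam i.succ) (barw i.succ)).mulVec
        (h (f s)) = ∑ i : Fin m, (barw i.succ ⬝ᵥ h (f s)) • ωbar i.succ := by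
      rw [← Matrix.mulVec_mulVec, sum_mulVec', mulVec_sum']
      exact Finset.sum_congr rfl fun i _ => by
        rw [vecMulVec_mulVec', Matrix.mulVec_smul, hωbar]
    funext j
    have hq : q j (s j) = ∑ i : Fin m, (barlam i.succ ⬝ᵥ (fun j => q j (s j))) * ωbar i.succ j := by
      have h1 := congrFun (hrecon (fun j => q j (s j))) j
      simp only [Finset.sum_apply, Pi.smul_apply, smul_eq_mul] at h1
      exact h1.symm
    simp only [Pi.add_apply, Finset.sum_apply, Pi.smul_apply, smul_eq_mul, hAmul]
    rw [hq, ← Finset.sum_add_distrib, ← Finset.sum_add_distrib, ← Finset.sum_add_distrib]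
    refine Finset.sum_congr rfl fun i _ => ?_
    rw [hkey i s]
    ring
end

section
/- Let d be a positive integer, let f : ℝ^d → ℝ^d be a C¹ diffeomorphism with inverse g, and let u₀, u₁, …, u_m be finitely many auxiliary values. For each uᵢ let p*(·|uᵢ) be a conditionally independent exponential-family density on ℝ^d, i.e. log p*(s|uᵢ) = Σ_{j=1}^d λ_j(uᵢ) q_j(s_j) + λ₀(uᵢ) − log Z(λ(uᵢ)) with p*(s|uᵢ) > 0 everywhere, and define p*(x|uᵢ) := p*(g(x)|uᵢ)·|det Dg(x)|. Assume there exist vectors w(uᵢ) ∈ ℝ^d, a function h : ℝ^d → ℝ^d, and positive scalar functions c(x), e(uᵢ) such that log( p*(x|uᵢ)/(c(x)·e(uᵢ)) ) = w(uᵢ)ᵀ h(x) for all x and all i, and that, with λ̄(uᵢ) := (λ₁(uᵢ),…,λ_d(uᵢ)) − (λ₁(u₀),…,λ_d(u₀)) and w̄(uᵢ) := w(uᵢ) − w(u₀), the matrices Λ̄ := Σ_{i=1}^m λ̄(uᵢ)λ̄(uᵢ)ᵀ and Σ_{i=1}^m w̄(uᵢ)λ̄(uᵢ)ᵀ are invertible.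 Then there exist an invertible d×d matrix A and a vector α ∈ ℝ^d such that q(s) = A·h(f(s)) + α for all s ∈ ℝ^d, where q(s) := (q₁(s₁),…,q_d(s_d)). -/
open MeasureTheory Matrix

/-- no-outlier special case of Theorem 1: for data `x = f(s)` with a
conditionally independent exponential-family source density
`log p*(s|uᵢ) = Σ_j λ_j(uᵢ) q_j(s_j) + λ₀(uᵢ) − log Z(λ(uᵢ))`, if the universal
approximation assumption `log(p*(x|uᵢ)/(c(x)e(uᵢ))) = w(uᵢ)ᵀh(x)` holds and the matrices
`Λ̄ = Σᵢ λ̄(uᵢ)λ̄(uᵢ)ᵀ` and `Σᵢ w̄(uᵢ)λ̄(uᵢ)ᵀ` are invertible, then `q(s) = A h(f(s)) + α`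
for an invertible matrix `A` and a vector `α`. -/
theorem identifiability_no_outliers (d m : ℕ) (hd : 0 < d)
    (f g : (Fin d → ℝ) → (Fin d → ℝ))
    (hf : ContDiff ℝ 1 f) (hg : ContDiff ℝ 1 g)
    (hgf : Function.LeftInverse g f) (hfg : Function.RightInverse g f)
    (lam : Fin (m + 1) → Fin d → ℝ) (lam0 : Fin (m + 1) → ℝ) (logZ : Fin (m + 1) → ℝ)
    (q : Fin d → ℝ → ℝ)
    (pstar : Fin (m + 1) → (Fin d → ℝ) → ℝ)
    (hpos : ∀ i s, 0 < pstar i s)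
    (hexp : ∀ i s, Real.log (pstar i s)
      = (∑ j, lam i j * q j (s j)) + lam0 i - logZ i)
    -- density of x given uᵢ, by the change of variables x = f(s), g = f⁻¹
    (pstarX : Fin (m + 1) → (Fin d → ℝ) → ℝ)
    (hpstarX : ∀ i x, pstarX i x = pstar i (g x) * |(fderiv ℝ g x).det|)
    -- universal approximation assumption
    (w : Fin (m + 1) → Fin d → ℝ) (h : (Fin d → ℝ) → (Fin d → ℝ))
    (c : (Fin d → ℝ) → ℝ) (e : Fin (m + 1) → ℝ)
    (hc : ∀ x, 0 < c x) (he : ∀ i, 0 < e i)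
    (huniv : ∀ i x, Real.log (pstarX i x / (c x * e i)) = ∑ j, w i j * h x j)
    -- invertibility of the two d × d matrices
    (barlam barw : Fin (m + 1) → Fin d → ℝ)
    (hbarlam : ∀ i, barlam i = lam i - lam 0)
    (hbarw : ∀ i, barw i = w i - w 0)
    (hΛ : IsUnit (∑ i : Fin m, Matrix.vecMulVec (barlam i.succ) (barlam i.succ)).det)
    (hW : IsUnit (∑ i : Fin m, Matrix.vecMulVec (barw i.succ) (barlam i.succ)).det) :
    ∃ A : Matrix (Fin d) (Fin d) ℝ, IsUnit A.det ∧ ∃ α : Fin d → ℝ,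
      ∀ s : Fin d → ℝ, (fun j => q j (s j)) = A.mulVec (h (f s)) + α := by
  have hfd : Differentiable ℝ f := hf.differentiable one_ne_zero
  have hgd : Differentiable ℝ g := hg.differentiable one_ne_zero
  -- the Jacobian of g never vanishes
  have hdet : ∀ x, (fderiv ℝ g x).det ≠ 0 := by
    intro x
    have hcomp : fderiv ℝ (f ∘ g) x = (fderiv ℝ f (g x)).comp (fderiv ℝ g x) :=
      fderiv_comp x (hfd _) (hgd _)
    have hid : f ∘ g = id := funext hfg
    rw [hid, fderiv_id] at hcomp
    have hmul : (fderiv ℝ f (g x)).det * (fderiv ℝ g x).det = 1 := by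
      have := congrArg ContinuousLinearMap.det hcomp.symm
      simpa [ContinuousLinearMap.det, ContinuousLinearMap.coe_comp,
        LinearMap.det_comp] using this
    intro h0
    rw [h0, mul_zero] at hmul
    exact zero_ne_one hmul
  have hXpos : ∀ i x, 0 < pstarX i x := by
    intro i x
    rw [hpstarX]
    exact mul_pos (hpos _ _) (abs_pos.mpr (hdet x))
  set b : Fin (m + 1) → ℝ := fun i =>
    (Real.log (e i) - Real.log (e 0)) + (logZ i - logZ 0) - (lam0 i - lam0 0) with hb
  -- key pointwise identity
  have key : ∀ (i : Fin (m + 1)) (s : Fin d → ℝ),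
      (∑ j, barlam i j * q j (s j)) = (∑ j, barw i j * h (f s) j) + b i := by
    intro i s
    have hEq : ∀ i' : Fin (m + 1),
        (∑ j, lam i' j * q j (s j)) + lam0 i' - logZ i'
          + Real.log |(fderiv ℝ g (f s)).det| - Real.log (c (f s)) - Real.log (e i')
          = ∑ j, w i' j * h (f s) j := by
      intro i'
      have h1 := huniv i' (f s)
      rw [Real.log_div (ne_of_gt (hXpos i' _)) (ne_of_gt (mul_pos (hc _) (he i'))),
        Real.log_mul (ne_of_gt (hc _)) (ne_of_gt (he i')),
        hpstarX,
        Real.log_mul (ne_of_gt (hpos _ _)) (abs_ne_zero.mpr (hdet _)),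
        hexp, hgf s] at h1
      linarith [h1]
    have e1 := hEq i
    have e0 := hEq 0
    have hbl : (∑ j, barlam i j * q j (s j))
        = (∑ j, lam i j * q j (s j)) - (∑ j, lam 0 j * q j (s j)) := by
      rw [← Finset.sum_sub_distrib]
      refine Finset.sum_congr rfl fun j _ => ?_
      rw [hbarlam]
      simp [sub_mul]
    have hbw : (∑ j, barw i j * h (f s) j)
        = (∑ j, w i j * h (f s) j) - (∑ j, w 0 j * h (f s) j) := by
      rw [← Finset.sum_sub_distrib]
      refine Finset.sum_congr rfl fun j _ => ?_
      rw [hbarw]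
      simp [sub_mul]
    rw [hbl, hbw]
    simp only [hb]
    linarith [e1, e0]
  -- matrices
  set L : Matrix (Fin m) (Fin d) ℝ := Matrix.of fun i j => barlam i.succ j with hL
  set W : Matrix (Fin m) (Fin d) ℝ := Matrix.of fun i j => barw i.succ j with hWdef
  have hLL : (∑ i : Fin m, Matrix.vecMulVec (barlam i.succ) (barlam i.succ)) = Lᵀ * L := by
    ext j k
    simp [Matrix.sum_apply, Matrix.vecMulVec_apply, Matrix.mul_apply, hL,
      Matrix.transpose_apply]
  have hWL : (∑ i : Fin m, Matrix.vecMulVec (barw i.succ) (barlam i.succ)) = Wᵀ * L := by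
    ext j k
    simp [Matrix.sum_apply, Matrix.vecMulVec_apply, Matrix.mul_apply, hL, hWdef,
      Matrix.transpose_apply]
  rw [hLL] at hΛ
  rw [hWL] at hW
  have hLW : IsUnit (Lᵀ * W).det := by
    have : Lᵀ * W = (Wᵀ * L)ᵀ := by
      rw [Matrix.transpose_mul, Matrix.transpose_transpose]
    rw [this, Matrix.det_transpose]
    exact hW
  refine ⟨(Lᵀ * L)⁻¹ * (Lᵀ * W), ?_, (Lᵀ * L)⁻¹.mulVec (Lᵀ.mulVec fun i : Fin m => b i.succ), ?_⟩
  · rw [Matrix.det_mul]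
    exact (Matrix.isUnit_nonsing_inv_det _ hΛ).mul hLW
  · intro s
    set qs : Fin d → ℝ := fun j => q j (s j) with hqs
    set hs : Fin d → ℝ := h (f s) with hhs
    set bv : Fin m → ℝ := fun i => b i.succ with hbv
    have hvec : L.mulVec qs = W.mulVec hs + bv := by
      funext i
      have := key i.succ s
      simpa [Matrix.mulVec, dotProduct, hL, hWdef, hqs, hhs, hbv] using this
    have h2 : (Lᵀ * L).mulVec qs = (Lᵀ * W).mulVec hs + Lᵀ.mulVec bv := by
      rw [← Matrix.mulVec_mulVec, hvec, Matrix.mulVec_add, Matrix.mulVec_mulVec]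
    have h3 := congrArg (Lᵀ * L)⁻¹.mulVec h2
    rwa [Matrix.mulVec_mulVec, Matrix.nonsing_inv_mul _ hΛ, Matrix.one_mulVec,
      Matrix.mulVec_add, Matrix.mulVec_mulVec] at h3
end

section
/- Let γ > 0 and define G_γ(t) := (t^{γ+1}/(1+t^{γ+1}))^{γ/(γ+1)} for t > 0, with G_γ(0) := 0. Let f : ℝ^d → ℝ^d be a C¹ diffeomorphism, let p*(s|u) and δ(s|u) be nonnegative conditional densities on ℝ^d (for u ranging over a measurable auxiliary space with probability density p(u)), let ε(u) ∈ [0,1), and suppose the supports are disjoint for every u: {s : p*(s|u) > 0} ∩ {s : δ(s|u) > 0} = ∅. Let p(s) be a marginal density with p(s) > 0 for all s. Transport all densities to x-space by the change of variables x = f(s) (so that p*(x|u), δ(x|u), p(x) are the corresponding densities of x), set δ(x,u) := δ(x|u)p(u), and define r*(x,u) := (1−ε(u))p*(x|u)/p(x) and ν(r) := ∬ G_γ(r(x,u)) ε(u) δ(x,u) dx du for nonnegative measurable r. Then: (i) ν(r*) = 0; and (ii) for every nonnegative measurable function r, ν(r) ≤ sup_{x,u} |G_γ(r(x,u)) − G_γ(r*(x,u))|.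 -/
open MeasureTheory

/-- `G_γ(t) = (t^{γ+1}/(1+t^{γ+1}))^{γ/(γ+1)}` (for `t = 0` this is `0` since `γ > 0`). -/
noncomputable def Ggam (γ t : ℝ) : ℝ := (t ^ (γ + 1) / (1 + t ^ (γ + 1))) ^ (γ / (γ + 1))

/-- Proposition 1: if the supports of the target conditional source density
`p*(s|u)` and the outlier conditional density `δ(s|u)` are disjoint for every `u`, then the
outlier term `ν` of the binary γ-cross entropy, transported to `x`-space by the diffeomorphism
`x = f(s)`, satisfies `ν(r*) = 0` at the ideal solution `r*(x,u) = (1−ε(u))p*(x|u)/p(x)`, and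
`ν(r) ≤ sup_{x,u} |G_γ(r(x,u)) − G_γ(r*(x,u))|` for every nonnegative measurable `r`. -/
theorem nu_vanishes_at_rstar (d du : ℕ) (γ : ℝ) (hγ : 0 < γ)
    (f g : (Fin d → ℝ) → (Fin d → ℝ))
    (hf : ContDiff ℝ 1 f) (hg : ContDiff ℝ 1 g)
    (hgf : Function.LeftInverse g f) (hfg : Function.RightInverse g f)
    (pstarS deltaS : (Fin d → ℝ) → (Fin du → ℝ) → ℝ)
    (pU : (Fin du → ℝ) → ℝ) (ε : (Fin du → ℝ) → ℝ) (pS : (Fin d → ℝ) → ℝ)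
    (hpstarS : ∀ s u, 0 ≤ pstarS s u) (hdeltaS : ∀ s u, 0 ≤ deltaS s u)
    (hpstarSm : Measurable (Function.uncurry pstarS))
    (hdeltaSm : Measurable (Function.uncurry deltaS))
    (hpUm : Measurable pU) (hεm : Measurable ε) (hpSm : Measurable pS)
    (hpU : ∀ u, 0 ≤ pU u) (hpUdens : ∫ u : Fin du → ℝ, pU u = 1)
    (hdeltadens : ∀ u, ∫ s : Fin d → ℝ, deltaS s u = 1)
    (hε : ∀ u, ε u ∈ Set.Ico (0 : ℝ) 1)
    (hpS : ∀ s, 0 < pS s)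
    (hdisjoint : ∀ u, {s | 0 < pstarS s u} ∩ {s | 0 < deltaS s u} = ∅)
    -- densities transported to x-space by the change of variables x = f(s)
    (pstarX deltaX : (Fin d → ℝ) → (Fin du → ℝ) → ℝ) (pX : (Fin d → ℝ) → ℝ)
    (hpstarX : ∀ x u, pstarX x u = pstarS (g x) u * |(fderiv ℝ g x).det|)
    (hdeltaX : ∀ x u, deltaX x u = deltaS (g x) u * |(fderiv ℝ g x).det|)
    (hpX : ∀ x, pX x = pS (g x) * |(fderiv ℝ g x).det|)
    (rstar : (Fin d → ℝ) → (Fin du → ℝ) → ℝ)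
    (hrstar : ∀ x u, rstar x u = (1 - ε u) * pstarX x u / pX x) :
    ((∫ z : (Fin d → ℝ) × (Fin du → ℝ),
        Ggam γ (rstar z.1 z.2) * (ε z.2 * (deltaX z.1 z.2 * pU z.2))) = 0) ∧
    (∀ r : (Fin d → ℝ) → (Fin du → ℝ) → ℝ, (∀ x u, 0 ≤ r x u) →
      Measurable (Function.uncurry r) →
      (∫ z : (Fin d → ℝ) × (Fin du → ℝ),
          Ggam γ (r z.1 z.2) * (ε z.2 * (deltaX z.1 z.2 * pU z.2)))
        ≤ ⨆ z : (Fin d → ℝ) × (Fin du → ℝ),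
            |Ggam γ (r z.1 z.2) - Ggam γ (rstar z.1 z.2)|) := by
  have hγ1 : (0:ℝ) < γ + 1 := by linarith
  -- basic facts about Ggam
  have hG0 : Ggam γ 0 = 0 := by
    unfold Ggam
    rw [Real.zero_rpow (ne_of_gt hγ1), zero_div,
      Real.zero_rpow (ne_of_gt (div_pos hγ hγ1))]
  have hG01 : ∀ t : ℝ, 0 ≤ t → 0 ≤ Ggam γ t ∧ Ggam γ t ≤ 1 := by
    intro t ht
    have h1 : 0 ≤ t ^ (γ + 1) := Real.rpow_nonneg ht _
    have h2 : (0:ℝ) < 1 + t ^ (γ + 1) := by linarith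
    constructor
    · exact Real.rpow_nonneg (div_nonneg h1 h2.le) _
    · apply Real.rpow_le_one (div_nonneg h1 h2.le)
      · rw [div_le_one h2]; linarith
      · positivity
  have hGm : Measurable (Ggam γ) := by
    have c1 : Continuous fun t : ℝ => t ^ (γ + 1) :=
      Real.continuous_rpow_const (le_of_lt hγ1)
    have c2 : Continuous fun t : ℝ => t ^ (γ / (γ + 1)) :=
      Real.continuous_rpow_const (le_of_lt (div_pos hγ hγ1))
    exact c2.measurable.comp (c1.measurable.div (measurable_const.add c1.measurable))
  -- properties of g
  have hgc : Continuous g := hg.continuous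
  have hgd : Differentiable ℝ g := hg.differentiable one_ne_zero
  have hginj : Function.Injective g := hfg.injective
  have hgsurj : Function.Surjective g := hgf.surjective
  have hdetc : Continuous fun x => |(fderiv ℝ g x).det| :=
    (ContinuousLinearMap.continuous_det.comp (hg.continuous_fderiv one_ne_zero)).abs
  -- rstar is zero on the support of deltaX
  have hkey : ∀ x u, 0 < deltaS (g x) u → rstar x u = 0 := by
    intro x u hd
    have hps : pstarS (g x) u = 0 := by
      by_contra h
      have hps' : 0 < pstarS (g x) u := lt_of_le_of_ne (hpstarS _ _) (Ne.symm h)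
      have : g x ∈ {s | 0 < pstarS s u} ∩ {s | 0 < deltaS s u} := ⟨hps', hd⟩
      rw [hdisjoint u] at this
      exact this
    rw [hrstar, hpstarX, hps, zero_mul, mul_zero, zero_div]
  -- the integrand at rstar is identically zero
  have hzero : ∀ z : (Fin d → ℝ) × (Fin du → ℝ),
      Ggam γ (rstar z.1 z.2) * (ε z.2 * (deltaX z.1 z.2 * pU z.2)) = 0 := by
    intro z
    rcases eq_or_lt_of_le (hdeltaS (g z.1) z.2) with h | h
    · have : deltaX z.1 z.2 = 0 := by rw [hdeltaX, ← h, zero_mul]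
      rw [this, zero_mul, mul_zero, mul_zero]
    · rw [hkey z.1 z.2 h, hG0, zero_mul]
  constructor
  · calc (∫ z : (Fin d → ℝ) × (Fin du → ℝ),
        Ggam γ (rstar z.1 z.2) * (ε z.2 * (deltaX z.1 z.2 * pU z.2)))
        = ∫ _ : (Fin d → ℝ) × (Fin du → ℝ), (0:ℝ) := by
          apply integral_congr_ae; filter_upwards with z; exact hzero z
      _ = 0 := integral_zero _ _
  · intro r hr hrm
    set w : (Fin d → ℝ) × (Fin du → ℝ) → ℝ :=
      fun z => ε z.2 * (deltaX z.1 z.2 * pU z.2) with hw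
    have hwnn : ∀ z, 0 ≤ w z := by
      intro z
      have : 0 ≤ deltaX z.1 z.2 := by
        rw [hdeltaX]; exact mul_nonneg (hdeltaS _ _) (abs_nonneg _)
      exact mul_nonneg (hε z.2).1 (mul_nonneg this (hpU z.2))
    -- measurability of w
    have hdXm : Measurable fun z : (Fin d → ℝ) × (Fin du → ℝ) => deltaX z.1 z.2 := by
      have h1 : Measurable fun z : (Fin d → ℝ) × (Fin du → ℝ) => deltaS (g z.1) z.2 :=
        hdeltaSm.comp ((hgc.measurable.comp measurable_fst).prodMk measurable_snd)
      have h2 : Measurable fun z : (Fin d → ℝ) × (Fin du → ℝ) =>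
          |(fderiv ℝ g z.1).det| := hdetc.measurable.comp measurable_fst
      simpa only [← hdeltaX, Pi.mul_def] using h1.mul h2
    have hwm : Measurable w :=
      (hεm.comp measurable_snd).mul (hdXm.mul (hpUm.comp measurable_snd))
    -- change of variables: for each u, ∫⁻ x, ofReal(deltaX x u) = 1
    have hCoV : ∀ u, (∫⁻ x : Fin d → ℝ, ENNReal.ofReal (deltaX x u)) = 1 := by
      intro u
      have hInt : Integrable (fun s => deltaS s u) :=
        integrable_of_integral_eq_one (hdeltadens u)
      have himg : g '' Set.univ = Set.univ := by
        rw [Set.image_univ]; exact hgsurj.range_eq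
      have hcv := lintegral_image_eq_lintegral_abs_det_fderiv_mul (volume)
        (MeasurableSet.univ)
        (fun x _ => (hgd x).hasFDerivAt.hasFDerivWithinAt)
        (hginj.injOn) (fun s => ENNReal.ofReal (deltaS s u))
      simp only [himg, Measure.restrict_univ] at hcv
      have heq : ∀ x, ENNReal.ofReal (deltaX x u)
          = ENNReal.ofReal |(fderiv ℝ g x).det| * ENNReal.ofReal (deltaS (g x) u) := by
        intro x
        rw [hdeltaX, mul_comm, ENNReal.ofReal_mul (abs_nonneg _)]
      calc (∫⁻ x : Fin d → ℝ, ENNReal.ofReal (deltaX x u))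
          = ∫⁻ x : Fin d → ℝ,
              ENNReal.ofReal |(fderiv ℝ g x).det| * ENNReal.ofReal (deltaS (g x) u) := by
            simp_rw [heq]
        _ = ∫⁻ s : Fin d → ℝ, ENNReal.ofReal (deltaS s u) := hcv.symm
        _ = ENNReal.ofReal (∫ s : Fin d → ℝ, deltaS s u) :=
            (ofReal_integral_eq_lintegral_ofReal hInt
              (Filter.Eventually.of_forall fun s => hdeltaS s u)).symm
        _ = 1 := by rw [hdeltadens u, ENNReal.ofReal_one]
    -- the total mass of w is at most 1
    have hwlint : (∫⁻ z : (Fin d → ℝ) × (Fin du → ℝ), ENNReal.ofReal (w z)) ≤ 1 := by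
      have hpUInt : Integrable pU := integrable_of_integral_eq_one hpUdens
      have hmeas : Measurable fun z : (Fin d → ℝ) × (Fin du → ℝ) =>
          ENNReal.ofReal (w z) := ENNReal.measurable_ofReal.comp hwm
      rw [MeasureTheory.Measure.volume_eq_prod, lintegral_prod_symm' _ hmeas]
      have hinner : ∀ u : Fin du → ℝ,
          (∫⁻ x : Fin d → ℝ, ENNReal.ofReal (w (x, u))) ≤ ENNReal.ofReal (pU u) := by
        intro u
        have heq : ∀ x : Fin d → ℝ, ENNReal.ofReal (w (x, u))
            = ENNReal.ofReal (ε u * pU u) * ENNReal.ofReal (deltaX x u) := by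
          intro x
          rw [← ENNReal.ofReal_mul (mul_nonneg (hε u).1 (hpU u))]
          congr 1
          simp only [hw]; ring
        have hmeas2 : Measurable fun x : Fin d → ℝ => ENNReal.ofReal (deltaX x u) := by
          apply ENNReal.measurable_ofReal.comp
          exact hdXm.comp (measurable_id.prodMk measurable_const)
        calc (∫⁻ x : Fin d → ℝ, ENNReal.ofReal (w (x, u)))
            = ∫⁻ x : Fin d → ℝ,
                ENNReal.ofReal (ε u * pU u) * ENNReal.ofReal (deltaX x u) := by
              simp_rw [heq]
          _ = ENNReal.ofReal (ε u * pU u) * ∫⁻ x, ENNReal.ofReal (deltaX x u) :=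
              lintegral_const_mul _ hmeas2
          _ = ENNReal.ofReal (ε u * pU u) := by rw [hCoV u, mul_one]
          _ ≤ ENNReal.ofReal (pU u) := by
              apply ENNReal.ofReal_le_ofReal
              calc ε u * pU u ≤ 1 * pU u :=
                    mul_le_mul_of_nonneg_right (le_of_lt (hε u).2) (hpU u)
                _ = pU u := one_mul _
      calc (∫⁻ u : Fin du → ℝ, ∫⁻ x : Fin d → ℝ, ENNReal.ofReal (w (x, u)))
          ≤ ∫⁻ u : Fin du → ℝ, ENNReal.ofReal (pU u) := lintegral_mono hinner
        _ = ENNReal.ofReal (∫ u, pU u) :=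
            (ofReal_integral_eq_lintegral_ofReal hpUInt
              (Filter.Eventually.of_forall hpU)).symm
        _ = 1 := by rw [hpUdens, ENNReal.ofReal_one]
    have hwint : Integrable w := by
      refine ⟨hwm.aestronglyMeasurable, ?_⟩
      rw [hasFiniteIntegral_iff_ofReal (Filter.Eventually.of_forall hwnn)]
      exact lt_of_le_of_lt hwlint ENNReal.one_lt_top
    have hwI : (∫ z, w z) ≤ 1 := by
      rw [integral_eq_lintegral_of_nonneg_ae (Filter.Eventually.of_forall hwnn)
        hwm.aestronglyMeasurable]
      calc (∫⁻ z, ENNReal.ofReal (w z)).toReal ≤ (1 : ENNReal).toReal :=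
            ENNReal.toReal_mono ENNReal.one_ne_top hwlint
        _ = 1 := ENNReal.toReal_one
    -- the supremum
    set M : ℝ := ⨆ z : (Fin d → ℝ) × (Fin du → ℝ),
      |Ggam γ (r z.1 z.2) - Ggam γ (rstar z.1 z.2)| with hM
    have hrstarnn : ∀ x u, 0 ≤ rstar x u := by
      intro x u
      rw [hrstar]
      apply div_nonneg _ _
      · apply mul_nonneg (by linarith [(hε u).2])
        rw [hpstarX]; exact mul_nonneg (hpstarS _ _) (abs_nonneg _)
      · rw [hpX]; exact mul_nonneg (le_of_lt (hpS _)) (abs_nonneg _)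
    have hbdd : BddAbove (Set.range fun z : (Fin d → ℝ) × (Fin du → ℝ) =>
        |Ggam γ (r z.1 z.2) - Ggam γ (rstar z.1 z.2)|) := by
      refine ⟨1, ?_⟩
      rintro _ ⟨z, rfl⟩
      obtain ⟨ha0, ha1⟩ := hG01 (r z.1 z.2) (hr _ _)
      obtain ⟨hb0, hb1⟩ := hG01 (rstar z.1 z.2) (hrstarnn _ _)
      rw [abs_sub_le_iff]; constructor <;> linarith
    have hM0 : 0 ≤ M := by
      have := le_ciSup hbdd ((fun _ => 0, fun _ => 0) : (Fin d → ℝ) × (Fin du → ℝ))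
      exact le_trans (abs_nonneg _) this
    -- pointwise bound
    have hpt : ∀ z : (Fin d → ℝ) × (Fin du → ℝ),
        Ggam γ (r z.1 z.2) * w z ≤ M * w z := by
      intro z
      rcases eq_or_lt_of_le (hdeltaS (g z.1) z.2) with h | h
      · have hdx : deltaX z.1 z.2 = 0 := by rw [hdeltaX, ← h, zero_mul]
        have : w z = 0 := by simp [hw, hdx]
        rw [this, mul_zero, mul_zero]
      · have hrst : rstar z.1 z.2 = 0 := hkey z.1 z.2 h
        have hle : Ggam γ (r z.1 z.2) ≤ M := by
          have h1 : Ggam γ (r z.1 z.2) ≤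
              |Ggam γ (r z.1 z.2) - Ggam γ (rstar z.1 z.2)| := by
            rw [hrst, hG0, sub_zero]
            exact le_abs_self _
          exact le_trans h1 (le_ciSup hbdd z)
        exact mul_le_mul_of_nonneg_right hle (hwnn z)
    -- integrability of the integrand
    have hGrm : Measurable fun z : (Fin d → ℝ) × (Fin du → ℝ) => Ggam γ (r z.1 z.2) :=
      hGm.comp hrm
    have hIr : Integrable fun z : (Fin d → ℝ) × (Fin du → ℝ) =>
        Ggam γ (r z.1 z.2) * w z := by
      apply hwint.mono' (hGrm.mul hwm).aestronglyMeasurable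
      filter_upwards with z
      obtain ⟨ha0, ha1⟩ := hG01 (r z.1 z.2) (hr _ _)
      simp only [Pi.mul_apply]
      rw [Real.norm_eq_abs, abs_of_nonneg (mul_nonneg ha0 (hwnn z))]
      calc Ggam γ (r z.1 z.2) * w z ≤ 1 * w z :=
            mul_le_mul_of_nonneg_right ha1 (hwnn z)
        _ = w z := one_mul _
    calc (∫ z : (Fin d → ℝ) × (Fin du → ℝ),
            Ggam γ (r z.1 z.2) * (ε z.2 * (deltaX z.1 z.2 * pU z.2)))
        = ∫ z, Ggam γ (r z.1 z.2) * w z := rfl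
      _ ≤ ∫ z, M * w z := integral_mono hIr (hwint.const_mul M) hpt
      _ = M * ∫ z, w z := integral_const_mul M w
      _ ≤ M * 1 := mul_le_mul_of_nonneg_left hwI hM0
      _ = M := mul_one M
end

section
/- Let γ > 0 and let u range over the finite set {1,…,K}. Let p*(x|u) and δ(x|u) be nonnegative measurable conditional densities on ℝ^d, ε(u) ∈ [0,1), p(u) ≥ 0 with Σ_u p(u) = 1, and set p(x|u) := (1−ε(u))p*(x|u) + ε(u)δ(x|u), p(x) := Σ_u p(x|u)p(u), and p(u|x) := p(x|u)p(u)/p(x) (wherever p(x) > 0). For a positive measurable function r(u,x), assume all the integrals below are finite and define: d_γ^K(r) := −(1/γ) log ∫ [ Σ_{u=1}^K r(u,x)^γ p(u|x) / (Σ_{u'=1}^K r(u',x)^{γ+1})^{γ/(γ+1)} ] p(x) dx; D_γ(r) := −(1/γ) log Σ_{u=1}^K (1−ε(u))p(u) ∫ [ r(u,x)^γ p*(x|u) / (Σ_{u'} r(u',x)^{γ+1})^{γ/(γ+1)} ] dx; and ν̃(r) := ∫ [ Σ_{u=1}^K r(u,x)^γ ε(u)δ(x|u)p(u) / (Σ_{u'}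 r(u',x)^{γ+1})^{γ/(γ+1)} ] dx. Then exp(−γ·d_γ^K(r)) = exp(−γ·D_γ(r)) + ν̃(r). -/
open MeasureTheory

/-- exact decomposition of the multiclass γ-cross entropy:
`exp(−γ·d_γ^K(r)) = exp(−γ·D_γ(r)) + ν̃(r)` under the contaminated conditional density
`p(x|u) = (1−ε(u))p*(x|u) + ε(u)δ(x|u)`. -/
theorem multiclass_gamma_cross_entropy_decomposition (d K : ℕ) (hK : 0 < K)
    (γ : ℝ) (hγ : 0 < γ)
    (pstar δ : Fin K → (Fin d → ℝ) → ℝ)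
    (hpstar : ∀ u x, 0 ≤ pstar u x) (hδ : ∀ u x, 0 ≤ δ u x)
    (ε : Fin K → ℝ) (hε : ∀ u, ε u ∈ Set.Ico (0 : ℝ) 1)
    (pU : Fin K → ℝ) (hpU : ∀ u, 0 ≤ pU u) (hpUsum : ∑ u, pU u = 1)
    (r : Fin K → (Fin d → ℝ) → ℝ) (hr : ∀ u x, 0 < r u x)
    (p : Fin K → (Fin d → ℝ) → ℝ)
    (hp : ∀ u x, p u x = (1 - ε u) * pstar u x + ε u * δ u x)
    (pX : (Fin d → ℝ) → ℝ) (hpX : ∀ x, pX x = ∑ u, p u x * pU u)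
    (pUgivenX : Fin K → (Fin d → ℝ) → ℝ)
    (hpUgivenX : ∀ u x, pUgivenX u x = p u x * pU u / pX x)
    (hiD : ∀ u : Fin K, Integrable (fun x : Fin d → ℝ =>
      r u x ^ γ * pstar u x / (∑ u', r u' x ^ (γ + 1)) ^ (γ / (γ + 1))))
    (hiν : Integrable (fun x : Fin d → ℝ =>
      (∑ u, r u x ^ γ * (ε u * δ u x * pU u)) / (∑ u', r u' x ^ (γ + 1)) ^ (γ / (γ + 1))))
    (hpos : 0 < ∑ u, (1 - ε u) * pU u
      * ∫ x : Fin d → ℝ, r u x ^ γ * pstar u x / (∑ u', r u' x ^ (γ + 1)) ^ (γ / (γ + 1)))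
    (dK D ν : ℝ)
    (hdK : dK = -(1 / γ) * Real.log (∫ x : Fin d → ℝ,
      (∑ u, r u x ^ γ * pUgivenX u x) / (∑ u', r u' x ^ (γ + 1)) ^ (γ / (γ + 1)) * pX x))
    (hD : D = -(1 / γ) * Real.log (∑ u, (1 - ε u) * pU u
      * ∫ x : Fin d → ℝ, r u x ^ γ * pstar u x / (∑ u', r u' x ^ (γ + 1)) ^ (γ / (γ + 1))))
    (hν : ν = ∫ x : Fin d → ℝ,
      (∑ u, r u x ^ γ * (ε u * δ u x * pU u)) / (∑ u', r u' x ^ (γ + 1)) ^ (γ / (γ + 1))) :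
    Real.exp (-γ * dK) = Real.exp (-γ * D) + ν := by
  classical
  set denom : (Fin d → ℝ) → ℝ := fun x => (∑ u', r u' x ^ (γ + 1)) ^ (γ / (γ + 1)) with hdenom
  have hdpos : ∀ x, 0 < denom x := by
    intro x
    apply Real.rpow_pos_of_pos
    have : (0:ℝ) < r ⟨0, hK⟩ x ^ (γ + 1) := Real.rpow_pos_of_pos (hr _ x) _
    exact Finset.sum_pos (fun u _ => Real.rpow_pos_of_pos (hr u x) _) ⟨⟨0, hK⟩, Finset.mem_univ _⟩
  -- pointwise identity
  have hpt : ∀ x, (∑ u, r u x ^ γ * pUgivenX u x) / denom x * pX x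
      = (∑ u, ((1 - ε u) * pU u) * (r u x ^ γ * pstar u x / denom x))
        + (∑ u, r u x ^ γ * (ε u * δ u x * pU u)) / denom x := by
    intro x
    by_cases h : pX x = 0
    · have hz : ∀ u : Fin K, p u x * pU u = 0 := by
        have h0 : ∑ u, p u x * pU u = 0 := by rw [← hpX x]; exact h
        have hnn : ∀ u ∈ Finset.univ, 0 ≤ p u x * pU u := by
          intro u _
          apply mul_nonneg _ (hpU u)
          rw [hp]
          have h1 := hε u
          have := hpstar u x; have := hδ u x
          nlinarith [h1.1, h1.2]
        intro u
        exact (Finset.sum_eq_zero_iff_of_nonneg hnn).1 h0 u (Finset.mem_univ u)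
      have hz2 : ∀ u : Fin K, pstar u x * pU u = 0 ∧ ε u * δ u x * pU u = 0 := by
        intro u
        have := hz u
        rw [hp] at this
        have h1 := hε u
        have ha : 0 ≤ (1 - ε u) * pstar u x * pU u :=
          mul_nonneg (mul_nonneg (by linarith [h1.2]) (hpstar u x)) (hpU u)
        have hb : 0 ≤ ε u * δ u x * pU u :=
          mul_nonneg (mul_nonneg h1.1 (hδ u x)) (hpU u)
        have hab : (1 - ε u) * pstar u x * pU u + ε u * δ u x * pU u = 0 := by linarith [this]; 
        have ha0 : (1 - ε u) * pstar u x * pU u = 0 := by linarith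
        have hb0 : ε u * δ u x * pU u = 0 := by linarith
        constructor
        · have hne : (1 - ε u) ≠ 0 := by linarith [h1.2]
          have := mul_eq_zero.1 (show (1 - ε u) * (pstar u x * pU u) = 0 by linarith [ha0]; )
          rcases this with h' | h'
          · exact absurd h' hne
          · exact h'
        · exact hb0
      rw [h, mul_zero]
      have e1 : (∑ u, ((1 - ε u) * pU u) * (r u x ^ γ * pstar u x / denom x)) = 0 := by
        apply Finset.sum_eq_zero; intro u _
        have := (hz2 u).1
        have : ((1 - ε u) * pU u) * (r u x ^ γ * pstar u x / denom x)
            = (1 - ε u) * (r u x ^ γ / denom x) * (pstar u x * pU u) := by ring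
        rw [this, (hz2 u).1, mul_zero]
      have e2 : (∑ u, r u x ^ γ * (ε u * δ u x * pU u)) = 0 := by
        apply Finset.sum_eq_zero; intro u _
        rw [(hz2 u).2, mul_zero]
      rw [e1, e2, zero_div, add_zero]
    · have key : ∑ u, r u x ^ γ * pUgivenX u x
          = (∑ u, r u x ^ γ * (p u x * pU u)) / pX x := by
        rw [Finset.sum_div]
        refine Finset.sum_congr rfl fun u _ => ?_
        rw [hpUgivenX]
        ring
      rw [key]
      have split : ∀ u : Fin K, r u x ^ γ * (p u x * pU u)
          = ((1 - ε u) * pU u) * (r u x ^ γ * pstar u x) + r u x ^ γ * (ε u * δ u x * pU u) := by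
        intro u; rw [hp]; ring
      have : (∑ u, r u x ^ γ * (p u x * pU u))
          = (∑ u, ((1 - ε u) * pU u) * (r u x ^ γ * pstar u x))
            + (∑ u, r u x ^ γ * (ε u * δ u x * pU u)) := by
        rw [← Finset.sum_add_distrib]
        exact Finset.sum_congr rfl fun u _ => split u
      have rhs1 : (∑ u, ((1 - ε u) * pU u) * (r u x ^ γ * pstar u x / denom x))
          = (∑ u, ((1 - ε u) * pU u) * (r u x ^ γ * pstar u x)) / denom x := by
        rw [Finset.sum_div]
        exact Finset.sum_congr rfl fun u _ => (mul_div_assoc _ _ _).symm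
      rw [this, rhs1, ← add_div, div_div, div_mul_eq_mul_div,
        mul_comm _ (pX x), mul_div_mul_left _ _ h]
  -- integral identity
  have hfun : (fun x => (∑ u, r u x ^ γ * pUgivenX u x) / denom x * pX x)
      = fun x => (∑ u, ((1 - ε u) * pU u) * (r u x ^ γ * pstar u x / denom x))
        + (∑ u, r u x ^ γ * (ε u * δ u x * pU u)) / denom x := funext hpt
  have hiSum : Integrable (fun x : Fin d → ℝ =>
      ∑ u, ((1 - ε u) * pU u) * (r u x ^ γ * pstar u x / denom x)) := by
    apply integrable_finset_sum
    intro u _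
    exact (hiD u).const_mul _
  have hItot : (∫ x : Fin d → ℝ, (∑ u, r u x ^ γ * pUgivenX u x) / denom x * pX x)
      = (∑ u, (1 - ε u) * pU u * ∫ x : Fin d → ℝ, r u x ^ γ * pstar u x / denom x) + ν := by
    rw [hfun, integral_add hiSum hiν, integral_finset_sum _ (fun u _ => (hiD u).const_mul _), hν]
    congr 1
    exact Finset.sum_congr rfl fun u _ => integral_const_mul _ _
  have hν0 : 0 ≤ ν := by
    rw [hν]
    apply integral_nonneg
    intro x
    apply div_nonneg _ (hdpos x).le
    apply Finset.sum_nonneg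
    intro u _
    exact mul_nonneg (Real.rpow_pos_of_pos (hr u x) _).le
      (mul_nonneg (mul_nonneg (hε u).1 (hδ u x)) (hpU u))
  set S : ℝ := ∑ u, (1 - ε u) * pU u
      * ∫ x : Fin d → ℝ, r u x ^ γ * pstar u x / denom x with hS
  have hexp : ∀ c : ℝ, 0 < c → Real.exp (-γ * (-(1 / γ) * Real.log c)) = c := by
    intro c hc
    have : -γ * (-(1 / γ) * Real.log c) = Real.log c := by
      field_simp
    rw [this, Real.exp_log hc]
  rw [hdK, hD, hexp _ hpos, hItot]
  have hSν : 0 < S + ν := by positivity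
  rw [hexp _ hSν]
end

section
/- Let γ > 0, K ≥ 1, let p*(x|u) for u ∈ {1,…,K} be measurable probability densities on ℝ^d with p*(x|u) > 0 for all x, let ε ∈ [0,1), and define for positive measurable r(u,x): D_γ(r) := −(1/γ) log [ ((1−ε)/K) Σ_{u=1}^K ∫ r(u,x)^γ p*(x|u) / (Σ_{u'=1}^K r(u',x)^{γ+1})^{γ/(γ+1)} dx ]. Then D_γ is minimized at r*(u,x) := p*(x|u); that is, D_γ(r*) ≤ D_γ(r) for every positive measurable r for which D_γ(r) is defined. The key pointwise fact is the Hölder inequality: for all a, t ∈ (0,∞)^K, Σ_u a_u t_u^γ ≤ (Σ_u a_u^{γ+1})^{1/(γ+1)} (Σ_u t_u^{γ+1})^{γ/(γ+1)}, with equality when t is proportional to a. -/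
open MeasureTheory

lemma holder_aux {K : ℕ} {γ : ℝ} (hγ : 0 < γ) (a t : Fin K → ℝ)
    (ha : ∀ u, 0 < a u) (ht : ∀ u, 0 < t u) :
    ∑ u, a u * t u ^ γ
      ≤ (∑ u, a u ^ (γ + 1)) ^ (1 / (γ + 1)) * (∑ u, t u ^ (γ + 1)) ^ (γ / (γ + 1)) := by
  have hpq : (γ + 1).HolderConjugate ((γ + 1) / γ) := by
    rw [Real.holderConjugate_iff]
    constructor
    · linarith
    · rw [inv_div]
      field_simp
      ring
  have := Real.inner_le_Lp_mul_Lq Finset.univ a (fun u => t u ^ γ) hpq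
  have h1 : ∀ u : Fin K, |a u| ^ (γ + 1) = a u ^ (γ + 1) := fun u => by
    rw [abs_of_pos (ha u)]
  have h2 : ∀ u : Fin K, |t u ^ γ| ^ ((γ + 1) / γ) = t u ^ (γ + 1) := fun u => by
    rw [abs_of_pos (Real.rpow_pos_of_pos (ht u) γ), ← Real.rpow_mul (ht u).le]
    congr 1
    field_simp
  have h3 : 1 / ((γ + 1) / γ) = γ / (γ + 1) := by rw [one_div_div]
  simp only [h1, h2, h3] at this
  exact this

/-- The multiclass functional
`D_γ(r) = −(1/γ) log[ ((1−ε)/K) Σ_u ∫ r(u,x)^γ p*(x|u) / (Σ_{u'} r(u',x)^{γ+1})^{γ/(γ+1)} dx ]`. -/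
noncomputable def Dgam (d K : ℕ) (γ ε : ℝ)
    (pstar r : Fin K → (Fin d → ℝ) → ℝ) : ℝ :=
  -(1 / γ) * Real.log (((1 - ε) / K)
    * ∑ u, ∫ x : Fin d → ℝ,
        r u x ^ γ * pstar u x / (∑ u', r u' x ^ (γ + 1)) ^ (γ / (γ + 1)))

/-- the multiclass γ-cross entropy `D_γ` is minimized at `r*(u,x) = p*(x|u)`,
together with the key pointwise Hölder inequality
`Σ_u a_u t_u^γ ≤ (Σ_u a_u^{γ+1})^{1/(γ+1)} (Σ_u t_u^{γ+1})^{γ/(γ+1)}`,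
with equality when `t` is proportional to `a`. -/
theorem multiclass_D_minimized_at_pstar (d K : ℕ) (hK : 1 ≤ K) (γ : ℝ) (hγ : 0 < γ)
    (pstar : Fin K → (Fin d → ℝ) → ℝ)
    (hpos : ∀ u x, 0 < pstar u x)
    (hmeas : ∀ u, Measurable (pstar u))
    (hdens : ∀ u, ∫ x : Fin d → ℝ, pstar u x = 1)
    (ε : ℝ) (hε : ε ∈ Set.Ico (0 : ℝ) 1)
    (hstarint : ∀ u : Fin K, Integrable (fun x : Fin d → ℝ =>
      pstar u x ^ γ * pstar u x / (∑ u', pstar u' x ^ (γ + 1)) ^ (γ / (γ + 1))))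
    (hstarpos : 0 < ((1 - ε) / K)
      * ∑ u, ∫ x : Fin d → ℝ,
          pstar u x ^ γ * pstar u x / (∑ u', pstar u' x ^ (γ + 1)) ^ (γ / (γ + 1))) :
    (∀ r : Fin K → (Fin d → ℝ) → ℝ, (∀ u x, 0 < r u x) → (∀ u, Measurable (r u)) →
      (∀ u : Fin K, Integrable (fun x : Fin d → ℝ =>
        r u x ^ γ * pstar u x / (∑ u', r u' x ^ (γ + 1)) ^ (γ / (γ + 1)))) →
      (0 < ((1 - ε) / K)
        * ∑ u, ∫ x : Fin d → ℝ,
            r u x ^ γ * pstar u x / (∑ u', r u' x ^ (γ + 1)) ^ (γ / (γ + 1))) →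
      Dgam d K γ ε pstar pstar ≤ Dgam d K γ ε pstar r) ∧
    (∀ a t : Fin K → ℝ, (∀ u, 0 < a u) → (∀ u, 0 < t u) →
      (∑ u, a u * t u ^ γ
          ≤ (∑ u, a u ^ (γ + 1)) ^ (1 / (γ + 1)) * (∑ u, t u ^ (γ + 1)) ^ (γ / (γ + 1))) ∧
      (∀ c : ℝ, 0 < c → t = c • a →
        ∑ u, a u * t u ^ γ
          = (∑ u, a u ^ (γ + 1)) ^ (1 / (γ + 1)) * (∑ u, t u ^ (γ + 1)) ^ (γ / (γ + 1)))) := by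
  have hK0 : 0 < (K : ℝ) := by exact_mod_cast Nat.lt_of_lt_of_le Nat.zero_lt_one hK
  constructor
  · intro r hrpos hrmeas hrint hrsumpos
    -- key pointwise bound
    have hC : 0 < (1 - ε) / K := div_pos (by linarith [hε.2]) hK0
    -- sum positivity of denominators
    have hSumr : ∀ x, 0 < ∑ u', r u' x ^ (γ + 1) := fun x =>
      Finset.sum_pos (fun u _ => Real.rpow_pos_of_pos (hrpos u x) _) ⟨⟨0, hK⟩, Finset.mem_univ _⟩
    have hSums : ∀ x, 0 < ∑ u', pstar u' x ^ (γ + 1) := fun x =>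
      Finset.sum_pos (fun u _ => Real.rpow_pos_of_pos (hpos u x) _) ⟨⟨0, hK⟩, Finset.mem_univ _⟩
    have key : ∀ x : Fin d → ℝ,
        (∑ u, r u x ^ γ * pstar u x / (∑ u', r u' x ^ (γ + 1)) ^ (γ / (γ + 1)))
          ≤ ∑ u, pstar u x ^ γ * pstar u x / (∑ u', pstar u' x ^ (γ + 1)) ^ (γ / (γ + 1)) := by
      intro x
      have hDr : 0 < (∑ u', r u' x ^ (γ + 1)) ^ (γ / (γ + 1)) :=
        Real.rpow_pos_of_pos (hSumr x) _
      have hDs : 0 < (∑ u', pstar u' x ^ (γ + 1)) ^ (γ / (γ + 1)) :=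
        Real.rpow_pos_of_pos (hSums x) _
      rw [← Finset.sum_div, ← Finset.sum_div, div_le_div_iff₀ hDr hDs]
      have hmul : ∀ u : Fin K, pstar u x ^ γ * pstar u x = pstar u x ^ (γ + 1) := fun u => by
        rw [Real.rpow_add (hpos u x), Real.rpow_one]
      have lhs : ∑ u, r u x ^ γ * pstar u x = ∑ u, pstar u x * r u x ^ γ := by
        simp [mul_comm]
      have holder := holder_aux hγ (fun u => pstar u x) (fun u => r u x)
        (fun u => hpos u x) (fun u => hrpos u x)
      calc (∑ u, r u x ^ γ * pstar u x) * (∑ u', pstar u' x ^ (γ + 1)) ^ (γ / (γ + 1))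
          ≤ ((∑ u, pstar u x ^ (γ + 1)) ^ (1 / (γ + 1))
              * (∑ u, r u x ^ (γ + 1)) ^ (γ / (γ + 1)))
              * (∑ u', pstar u' x ^ (γ + 1)) ^ (γ / (γ + 1)) := by
            apply mul_le_mul_of_nonneg_right _ hDs.le
            rw [lhs]; exact holder
        _ = (∑ u, pstar u x ^ γ * pstar u x) * (∑ u', r u' x ^ (γ + 1)) ^ (γ / (γ + 1)) := by
            simp only [hmul]
            have h11 : 1 / (γ + 1) + γ / (γ + 1) = 1 := by field_simp; ring
            rw [mul_right_comm, ← Real.rpow_add (hSums x), h11, Real.rpow_one]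
    -- integral comparison
    have hintle :
        (∑ u, ∫ x : Fin d → ℝ, r u x ^ γ * pstar u x / (∑ u', r u' x ^ (γ + 1)) ^ (γ / (γ + 1)))
          ≤ ∑ u, ∫ x : Fin d → ℝ,
              pstar u x ^ γ * pstar u x / (∑ u', pstar u' x ^ (γ + 1)) ^ (γ / (γ + 1)) := by
      rw [← integral_finset_sum _ (fun u _ => hrint u),
        ← integral_finset_sum _ (fun u _ => hstarint u)]
      exact integral_mono (integrable_finset_sum _ (fun u _ => hrint u))
        (integrable_finset_sum _ (fun u _ => hstarint u)) key
    unfold Dgam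
    have hlog : Real.log (((1 - ε) / K)
        * ∑ u, ∫ x : Fin d → ℝ,
            r u x ^ γ * pstar u x / (∑ u', r u' x ^ (γ + 1)) ^ (γ / (γ + 1)))
        ≤ Real.log (((1 - ε) / K)
        * ∑ u, ∫ x : Fin d → ℝ,
            pstar u x ^ γ * pstar u x / (∑ u', pstar u' x ^ (γ + 1)) ^ (γ / (γ + 1))) :=
      Real.log_le_log hrsumpos (mul_le_mul_of_nonneg_left hintle hC.le)
    have hneg : -(1 / γ) ≤ 0 := by
      have : 0 < 1 / γ := by positivity
      linarith
    exact mul_le_mul_of_nonpos_left hlog hneg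
  · intro a t ha ht
    refine ⟨holder_aux hγ a t ha ht, ?_⟩
    intro c hc htc
    subst htc
    have hSa : 0 < ∑ u, a u ^ (γ + 1) :=
      Finset.sum_pos (fun u _ => Real.rpow_pos_of_pos (ha u) _) ⟨⟨0, hK⟩, Finset.mem_univ _⟩
    have hca : ∀ u : Fin K, (c • a) u = c * a u := fun u => rfl
    have lhs : ∑ u, a u * (c • a) u ^ γ = c ^ γ * ∑ u, a u ^ (γ + 1) := by
      rw [Finset.mul_sum]
      refine Finset.sum_congr rfl fun u _ => ?_
      rw [hca, Real.mul_rpow hc.le (ha u).le, Real.rpow_add (ha u), Real.rpow_one]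
      ring
    have rhs : ∑ u, (c • a) u ^ (γ + 1) = c ^ (γ + 1) * ∑ u, a u ^ (γ + 1) := by
      rw [Finset.mul_sum]
      refine Finset.sum_congr rfl fun u _ => ?_
      rw [hca, Real.mul_rpow hc.le (ha u).le]
    rw [lhs, rhs, Real.mul_rpow (by positivity) hSa.le, ← Real.rpow_mul hc.le]
    have e1 : (γ + 1) * (γ / (γ + 1)) = γ := by field_simp
    rw [e1]
    rw [show (∑ u, a u ^ (γ + 1)) ^ (1 / (γ + 1)) * (c ^ γ * (∑ u, a u ^ (γ + 1)) ^ (γ / (γ + 1)))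
        = c ^ γ * ((∑ u, a u ^ (γ + 1)) ^ (1 / (γ + 1)) * (∑ u, a u ^ (γ + 1)) ^ (γ / (γ + 1)))
      from by ring]
    rw [← Real.rpow_add hSa]
    have e2 : 1 / (γ + 1) + γ / (γ + 1) = 1 := by field_simp; ring
    rw [e2, Real.rpow_one]
end
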